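/- Let q be a prime power, n a positive integer, and for i = 1, ..., n let S_i ⊆ F_q^* with 0 < |S_i| < q-1, not all |S_i| equal to q-2. Set T_i = F_q^* \ S_i, t_i = |T_i|, and m = \prod_{i=1}^n t_i. Let P(X_1,...,X_n) = \prod_{i=1}^n \prod_{x ∈ S_i}(X_i - x). Then the support of P is disjoint from U(q, m-1, n); that is, every monomial X_1^{i_1} ··· X_n^{i_n} occurring in P with nonzero coefficient satisfies \prod_{s=1}^n (q-1-i_s) ≥ m. -/
import Mathlib


/-- The exponent vector `e` belongs to the set `U(q,m,n)`, i.e. the monomial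
`X_1^{e_1} ⋯ X_n^{e_n}` lies in `M(q,n)` and `∏_{s=1}^n (q-1-e_s) ≤ m`. -/
def inU (q m : ℕ) {n : ℕ} (e : Fin n →₀ ℕ) : Prop :=
  (∀ i, e i < q - 1) ∧ ∏ s : Fin n, (q - 1 - e s) ≤ m

/-- **Support of `P` avoids `U(q,m-1,n)`.** Let `S_i ⊆ F_q^*` with `0 < |S_i| < q-1`, not
all `|S_i| = q-2`, `T_i = F_q^* \ S_i`, `t_i = |T_i|`, `m = ∏ t_i`, and
`P = ∏_{i=1}^n ∏_{x ∈ S_i}(X_i - x)`. Then the support of `P` is disjoint from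
`U(q,m-1,n)`; that is, every monomial `X_1^{e_1} ⋯ X_n^{e_n}` occurring in `P` with
nonzero coefficient satisfies `∏_{s=1}^n (q-1-e_s) ≥ m`. -/
theorem support_avoids_U
    {F : Type*} [Field F] [Fintype F] [DecidableEq F] {q n : ℕ}
    (hq : Fintype.card F = q) (hn : 0 < n)
    (S : Fin n → Finset F) (hS0 : ∀ i, (0 : F) ∉ S i)
    (hScard : ∀ i, 0 < (S i).card ∧ (S i).card < q - 1)
    (hnotall : ¬ ∀ i, (S i).card = q - 2)
    (T : Fin n → Finset F) (hT : ∀ i, T i = Finset.univ.filter (· ≠ (0 : F)) \ S i)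
    (t : Fin n → ℕ) (ht : ∀ i, t i = (T i).card)
    (m : ℕ) (hm : m = ∏ i, t i)
    (P : MvPolynomial (Fin n) F)
    (hP : P = ∏ i, ∏ x ∈ S i, (MvPolynomial.X i - MvPolynomial.C x)) :
    ∀ e ∈ P.support, ¬ inU q (m - 1) e ∧ m ≤ ∏ s : Fin n, (q - 1 - e s) := by

  intro e he
  have hdeg : ∀ i, e i ≤ (S i).card := by
    intro i
    have h1 : e i ≤ P.degreeOf i := MvPolynomial.monomial_le_degreeOf i he
    refine h1.trans ?_
    rw [hP]
    refine (MvPolynomial.degreeOf_prod_le i _ _).trans ?_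
    have hfac : ∀ j, MvPolynomial.degreeOf i
        (∏ x ∈ S j, (MvPolynomial.X j - MvPolynomial.C x)) ≤
        if j = i then (S i).card else 0 := by
      intro j
      refine (MvPolynomial.degreeOf_prod_le i _ _).trans ?_
      have h2 : ∀ x ∈ S j, MvPolynomial.degreeOf i
          (MvPolynomial.X j - MvPolynomial.C x) ≤ if j = i then 1 else 0 := by
        intro x _
        refine (MvPolynomial.degreeOf_sub_le i _ _).trans ?_
        rw [MvPolynomial.degreeOf_X, MvPolynomial.degreeOf_C]
        rcases eq_or_ne j i with h | h
        · simp [h]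
        · simp [h, h.symm]
      calc ∑ x ∈ S j, MvPolynomial.degreeOf i (MvPolynomial.X j - MvPolynomial.C x)
          ≤ ∑ _x ∈ S j, (if j = i then 1 else 0) := Finset.sum_le_sum h2
        _ ≤ if j = i then (S i).card else 0 := by
            by_cases h : j = i <;> simp [h]
    calc ∑ j, MvPolynomial.degreeOf i (∏ x ∈ S j, (MvPolynomial.X j - MvPolynomial.C x))
        ≤ ∑ j, if j = i then (S i).card else 0 := Finset.sum_le_sum fun j _ => hfac j
      _ = (S i).card := by simp
  have ht' : ∀ i, t i = q - 1 - (S i).card := by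
    intro i
    have hsub : S i ⊆ Finset.univ.filter (· ≠ (0 : F)) := by
      intro x hx
      simp only [Finset.mem_filter, Finset.mem_univ, true_and]
      rintro rfl; exact hS0 i hx
    have hcardf : (Finset.univ.filter (· ≠ (0 : F))).card = q - 1 := by
      rw [Finset.filter_ne', Finset.card_erase_of_mem (Finset.mem_univ _),
        Finset.card_univ, hq]
    rw [ht, hT, Finset.card_sdiff_of_subset hsub, hcardf]
  have hkey : ∀ i, t i ≤ q - 1 - e i := by
    intro i
    rw [ht' i]
    exact Nat.sub_le_sub_left (hdeg i) _
  have hmle : m ≤ ∏ s : Fin n, (q - 1 - e s) := by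
    rw [hm]
    exact Finset.prod_le_prod' fun i _ => hkey i
  have hm1 : 1 ≤ m := by
    rw [hm]
    refine Finset.one_le_prod' fun i _ => ?_
    rw [ht' i]
    have := (hScard i).2
    omega
  refine ⟨fun hu => ?_, hmle⟩
  have := hu.2
  omega
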